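/- Let A be a real symmetric n×n matrix with largest eigenvalue magnitude λ₁ = ‖A‖₂. For any 0 ≤ α ≤ 1/4 and any unit vector x with ‖Ax‖₂ ≥ (1−α)λ₁, one has xᵀAx ≥ (1−5α)λ₁, provided all eigenvalues of A are nonnegative. -/

import Mathlib

open Matrix
open scoped MatrixOrder


/-- If `A` is symmetric PSD with top eigenvalue (spectral norm) `λ₁`, `0 ≤ α ≤ 1/4`,
and `x` is a unit vector with `‖Ax‖₂ ≥ (1−α)λ₁`, then `xᵀ A x ≥ (1−5α)λ₁`. -/
theorem rayleigh_of_norm_large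
    (n : ℕ) (A : Matrix (Fin n) (Fin n) ℝ) (hA : A.IsSymm) (hpsd : A.PosSemidef)
    (lam : ℝ)
    (hub : ∀ y : Fin n → ℝ, ∑ i, (y i) ^ 2 = 1 →
      Real.sqrt (∑ i, (A.mulVec y i) ^ 2) ≤ lam)
    (hattain : ∃ y : Fin n → ℝ, ∑ i, (y i) ^ 2 = 1 ∧
      Real.sqrt (∑ i, (A.mulVec y i) ^ 2) = lam)
    (α : ℝ) (hα0 : 0 ≤ α) (hα1 : α ≤ 1 / 4)
    (x : Fin n → ℝ) (hx : ∑ i, (x i) ^ 2 = 1)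
    (hAx : Real.sqrt (∑ i, (A.mulVec x i) ^ 2) ≥ (1 - α) * lam) :
    ∑ i, x i * A.mulVec x i ≥ (1 - 5 * α) * lam := by
  obtain ⟨y₀, hy₀, hy₀'⟩ := hattain
  have hlam0 : 0 ≤ lam := hy₀' ▸ Real.sqrt_nonneg _
  have hquad : ∀ y : Fin n → ℝ, 0 ≤ y ⬝ᵥ A.mulVec y := by
    intro y; have := hpsd.dotProduct_mulVec_nonneg y; simpa using this
  -- operator norm bound, squared
  have hnorm : ∀ y : Fin n → ℝ, ∑ i, (A.mulVec y i) ^ 2 ≤ lam ^ 2 * ∑ i, (y i) ^ 2 := by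
    intro y
    set s := ∑ i, (y i) ^ 2 with hs
    have hs0 : 0 ≤ s := Finset.sum_nonneg fun i _ => sq_nonneg _
    have hT0 : (0:ℝ) ≤ ∑ i, (A.mulVec y i) ^ 2 := Finset.sum_nonneg fun i _ => sq_nonneg _
    rcases eq_or_lt_of_le hs0 with h0 | hpos
    · have hy : ∀ i, y i = 0 := by
        intro i
        have := (Finset.sum_eq_zero_iff_of_nonneg (fun i _ => sq_nonneg (y i))).mp h0.symm i (Finset.mem_univ i)
        exact pow_eq_zero_iff (by norm_num) |>.mp this
      have hy0 : y = 0 := funext hy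
      subst hy0
      simp only [Matrix.mulVec_zero, Pi.zero_apply]
      simpa using mul_nonneg (sq_nonneg lam) hs0
    · set c : ℝ := (Real.sqrt s)⁻¹ with hc
      have hsq : Real.sqrt s > 0 := Real.sqrt_pos.mpr hpos
      have hc0 : 0 < c := inv_pos.mpr hsq
      have hunit : ∑ i, ((c • y) i) ^ 2 = 1 := by
        simp only [Pi.smul_apply, smul_eq_mul, mul_pow]
        rw [← Finset.mul_sum, ← hs, hc, inv_pow, Real.sq_sqrt hs0]
        field_simp
      have h1 := hub (c • y) hunit
      rw [Matrix.mulVec_smul] at h1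
      have h2 : Real.sqrt (∑ i, (c • A.mulVec y) i ^ 2) =
          c * Real.sqrt (∑ i, (A.mulVec y i) ^ 2) := by
        simp only [Pi.smul_apply, smul_eq_mul, mul_pow]
        rw [← Finset.mul_sum, Real.sqrt_mul (by positivity), Real.sqrt_sq hc0.le]
      rw [h2] at h1
      have h3 : Real.sqrt (∑ i, (A.mulVec y i) ^ 2) ≤ lam * Real.sqrt s := by
        have h4 := mul_le_mul_of_nonneg_left h1 hsq.le
        calc Real.sqrt (∑ i, (A.mulVec y i) ^ 2)
            = Real.sqrt s * (c * Real.sqrt (∑ i, (A.mulVec y i) ^ 2)) := by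
              rw [hc]; field_simp
          _ ≤ Real.sqrt s * lam := h4
          _ = lam * Real.sqrt s := by ring
      nlinarith [Real.sq_sqrt hT0, Real.sqrt_nonneg (∑ i, (A.mulVec y i) ^ 2),
        Real.sq_sqrt hs0, Real.sqrt_nonneg s]
  -- quadratic form upper bound
  have hqub : ∀ y : Fin n → ℝ, y ⬝ᵥ A.mulVec y ≤ lam * ∑ i, (y i) ^ 2 := by
    intro y
    have hcs := Finset.sum_mul_sq_le_sq_mul_sq Finset.univ y (A.mulVec y)
    have hn := hnorm y
    have hq := hquad y
    have hs0 : (0:ℝ) ≤ ∑ i, (y i) ^ 2 := Finset.sum_nonneg fun i _ => sq_nonneg _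
    have hdp : y ⬝ᵥ A.mulVec y = ∑ i, y i * A.mulVec y i := rfl
    rw [hdp] at hq ⊢
    nlinarith [mul_nonneg hlam0 hs0, mul_le_mul_of_nonneg_left hn hs0, sq_nonneg (∑ i, y i ^ 2)]
  -- sqrt of A
  set B := CFC.sqrt A with hBdef
  have hBB : B * B = A := CFC.sqrt_mul_sqrt_self A hpsd.nonneg
  have hBsym : Bᵀ = B := by
    have := (CFC.sqrt_nonneg A).posSemidef.1
    simpa [Matrix.IsHermitian] using this
  set y := B.mulVec x with hy
  set z := A.mulVec x with hz
  have hzy : z = B.mulVec y := by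
    rw [hz, hy, Matrix.mulVec_mulVec, hBB]
  -- key identities
  have key1 : ∀ v : Fin n → ℝ, (B.mulVec v) ⬝ᵥ (B.mulVec v) = v ⬝ᵥ A.mulVec v := by
    intro v
    rw [Matrix.dotProduct_mulVec, ← Matrix.mulVec_transpose, hBsym,
      Matrix.mulVec_mulVec, hBB, dotProduct_comm]
  have kz : z ⬝ᵥ z = y ⬝ᵥ A.mulVec y := by rw [hzy]; exact key1 y
  have ky : y ⬝ᵥ y = x ⬝ᵥ A.mulVec x := key1 x
  have hdotsq : ∀ v : Fin n → ℝ, v ⬝ᵥ v = ∑ i, (v i) ^ 2 := by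
    intro v; simp [dotProduct, sq]
  -- S ≤ lam * Q
  have hSQ : ∑ i, (z i) ^ 2 ≤ lam * (x ⬝ᵥ A.mulVec x) := by
    calc ∑ i, (z i) ^ 2 = z ⬝ᵥ z := (hdotsq z).symm
      _ = y ⬝ᵥ A.mulVec y := kz
      _ ≤ lam * ∑ i, (y i) ^ 2 := hqub y
      _ = lam * (y ⬝ᵥ y) := by rw [hdotsq y]
      _ = lam * (x ⬝ᵥ A.mulVec x) := by rw [ky]
  -- S ≥ ((1-α)lam)²
  have hS0 : (0:ℝ) ≤ ∑ i, (z i) ^ 2 := Finset.sum_nonneg fun i _ => sq_nonneg _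
  have hSl : ((1 - α) * lam) ^ 2 ≤ ∑ i, (z i) ^ 2 := by
    have h1 : (0:ℝ) ≤ (1 - α) * lam := mul_nonneg (by linarith) hlam0
    have := Real.sq_sqrt hS0
    nlinarith [Real.sqrt_nonneg (∑ i, (z i) ^ 2)]
  have hQ0 : 0 ≤ x ⬝ᵥ A.mulVec x := hquad x
  have hgoal : x ⬝ᵥ A.mulVec x ≥ (1 - 5 * α) * lam := by
    rcases eq_or_lt_of_le hlam0 with h0 | hpos
    · rw [← h0]; simpa using hQ0
    · nlinarith [mul_nonneg hα0 hlam0, mul_nonneg hα0 (mul_nonneg hlam0 hlam0),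
        mul_nonneg (mul_nonneg hα0 hα0) (mul_nonneg hlam0 hlam0), mul_pos hpos hpos]
  exact hgoal
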